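/- arXiv:2209.02463 — 7 statements merged into one kernel-verified Lean document; each statement's English description precedes it below -/
import Mathlib

section
/- Let φ_x(x) = (x^5 - 8x^4 + 48x^3 - 512x + 1024)/(x^2(x-4)^2) and φ_y(x) = ((x^3 + 4x^2 + 16x - 64)(x^3 - 16x^2 + 64x - 128))/(x^3(x-4)^3) be rational functions over ℚ. Then as elements of the rational function field ℚ(x), one has φ_x(x)^3 - 4·φ_x(x)^2 - 160·φ_x(x) - 1264 = φ_y(x)^2 · (x^3 - 4x^2 + 16). -/
/-- The coordinate functions of the 5-isogeny E1 → E2 (11a.3 → 11a.2) satisfy the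
Weierstrass equation of E2 : y² = x³ - 4x² - 160x - 1264, given y² = x³ - 4x² + 16 on E1. -/
theorem stmt_0 :
    let x : RatFunc ℚ := RatFunc.X
    let φx : RatFunc ℚ := (x^5 - 8*x^4 + 48*x^3 - 512*x + 1024) / (x^2 * (x - 4)^2)
    let φy : RatFunc ℚ :=
      ((x^3 + 4*x^2 + 16*x - 64) * (x^3 - 16*x^2 + 64*x - 128)) / (x^3 * (x - 4)^3)
    φx^3 - 4*φx^2 - 160*φx - 1264 = φy^2 * (x^3 - 4*x^2 + 16) := by
  intro x φx φy
  have hx : x ≠ 0 := RatFunc.X_ne_zero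
  have hx4 : x - 4 ≠ 0 := by
    have h1 : (x - 4 : RatFunc ℚ) = algebraMap (Polynomial ℚ) (RatFunc ℚ) (Polynomial.X - 4) := by
      simp [x, map_ofNat]
    have h2 : (Polynomial.X - 4 : Polynomial ℚ) ≠ 0 := by
      intro h
      have := congrArg (fun p => Polynomial.coeff p 1) h
      simp at this
    rw [h1, ne_eq, FaithfulSMul.algebraMap_eq_zero_iff]
    exact h2
  simp only [φx, φy]
  field_simp [hx, hx4]
  ring
end

section
/- Let φ_x(x) = (x^6 + 5x^4 + 16x^3 - 5x^2 - 1)/(x(x+1)^2(x-1)^2) and φ_y(x) = ((x^2+1)(x^2-4x-1)(x^4+4x^3+6x^2-4x+1))/(x^2(x+1)^3(x-1)^3) be rational functions over ℚ. Then in ℚ(x) one has φ_x(x)^3 + φ_x(x)^2 - 36·φ_x(x) - 140 = φ_y(x)^2 · (x^3 + x^2 - x). -/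
/-- The coordinate functions of the 6-isogeny E1 → E2 (20.a3 → 20.a2) satisfy the
Weierstrass equation of E2 : y² = x³ + x² - 36x - 140, given y² = x³ + x² - x on E1. -/
theorem stmt_1 :
    let x : RatFunc ℚ := RatFunc.X
    let φx : RatFunc ℚ := (x^6 + 5*x^4 + 16*x^3 - 5*x^2 - 1) / (x * (x + 1)^2 * (x - 1)^2)
    let φy : RatFunc ℚ :=
      ((x^2 + 1) * (x^2 - 4*x - 1) * (x^4 + 4*x^3 + 6*x^2 - 4*x + 1)) /
        (x^2 * (x + 1)^3 * (x - 1)^3)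
    φx^3 + φx^2 - 36*φx - 140 = φy^2 * (x^3 + x^2 - x) := by
  intro x φx φy
  have h0 : x ≠ 0 := RatFunc.X_ne_zero
  have h1 : x + 1 ≠ 0 := by
    intro h
    have := congrArg (RatFunc.eval (RingHom.id ℚ) 0) h
    simp [x, RatFunc.eval_add, RatFunc.eval_X, RatFunc.eval_one] at this
  have h2 : x - 1 ≠ 0 := by
    intro h
    have hx1 : x = 1 := by linear_combination h
    have := congrArg (RatFunc.eval (RingHom.id ℚ) 0) hx1
    simp [x] at this
  set a : RatFunc ℚ := x^6 + 5*x^4 + 16*x^3 - 5*x^2 - 1 with ha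
  set b : RatFunc ℚ := x * (x + 1)^2 * (x - 1)^2 with hbdef
  set c : RatFunc ℚ := (x^2 + 1) * (x^2 - 4*x - 1) * (x^4 + 4*x^3 + 6*x^2 - 4*x + 1) with hc
  set d : RatFunc ℚ := x^2 * (x + 1)^3 * (x - 1)^3 with hddef
  have hb : b ≠ 0 := mul_ne_zero (mul_ne_zero h0 (pow_ne_zero _ h1)) (pow_ne_zero _ h2)
  have hd : d ≠ 0 := mul_ne_zero (mul_ne_zero (pow_ne_zero _ h0) (pow_ne_zero _ h1)) (pow_ne_zero _ h2)
  have hxb : φx * b = a := div_mul_cancel₀ a hb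
  have hyd : φy * d = c := div_mul_cancel₀ c hd
  have e1 : φx^3 + φx^2 - 36*φx - 140
      = (a^3 + a^2*b - 36*a*b^2 - 140*b^3) / b^3 := by
    rw [eq_div_iff (pow_ne_zero 3 hb)]
    calc (φx^3 + φx^2 - 36*φx - 140) * b^3
        = (φx*b)^3 + (φx*b)^2*b - 36*(φx*b)*b^2 - 140*b^3 := by ring
      _ = a^3 + a^2*b - 36*a*b^2 - 140*b^3 := by rw [hxb]
  have e2 : φy^2 * (x^3 + x^2 - x) = (c^2 * (x^3 + x^2 - x)) / d^2 := by
    rw [eq_div_iff (pow_ne_zero 2 hd)]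
    calc φy^2 * (x^3 + x^2 - x) * d^2
        = (φy*d)^2 * (x^3 + x^2 - x) := by ring
      _ = c^2 * (x^3 + x^2 - x) := by rw [hyd]
  rw [e1, e2, div_eq_div_iff (pow_ne_zero 3 hb) (pow_ne_zero 2 hd), ha, hbdef, hc, hddef]
  ring
end

section
/- In the polynomial ring ℚ(u)[x], define p⁺(x) = (1-u^3)x^6 - 12(1-u^3)x^5 + 16(1-3u^3)x^4 - 64(3-u^3)x^3 + 1536x^2 - 6144x + 8192 and p⁻(x) = (1+u^3)x^6 - 12(1+u^3)x^5 + 16(1+3u^3)x^4 - 64(3+u^3)x^3 + 1536x^2 - 6144x + 8192. Let φ_x(x) = (x^5 - 8x^4 + 48x^3 - 512x + 1024)/(x^2(x-4)^2). Then in ℚ(u)(x) one has φ_x(x)^3 - 4φ_x(x)^2 - 160φ_x(x) - 1264 - u^6(x^3 - 4x^2 + 16) = p⁺(x)·p⁻(x)·(x^3 - 4x^2 + 16) / (x^6(x-4)^6). -/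
/-- Factorization of the intersection of the cubic C_u with the degree-5 curve
x₂ = φ_x(x₁), in the rational function field ℚ(u)(x). -/
theorem stmt_2 :
    let u : RatFunc (RatFunc ℚ) := RatFunc.C RatFunc.X
    let x : RatFunc (RatFunc ℚ) := RatFunc.X
    let φx : RatFunc (RatFunc ℚ) := (x^5 - 8*x^4 + 48*x^3 - 512*x + 1024) / (x^2 * (x - 4)^2)
    let pplus : RatFunc (RatFunc ℚ) :=
      (1 - u^3)*x^6 - 12*(1 - u^3)*x^5 + 16*(1 - 3*u^3)*x^4 - 64*(3 - u^3)*x^3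
        + 1536*x^2 - 6144*x + 8192
    let pminus : RatFunc (RatFunc ℚ) :=
      (1 + u^3)*x^6 - 12*(1 + u^3)*x^5 + 16*(1 + 3*u^3)*x^4 - 64*(3 + u^3)*x^3
        + 1536*x^2 - 6144*x + 8192
    φx^3 - 4*φx^2 - 160*φx - 1264 - u^6*(x^3 - 4*x^2 + 16) =
      pplus * pminus * (x^3 - 4*x^2 + 16) / (x^6 * (x - 4)^6) := by
  intro u x φx pplus pminus
  have hx : x ≠ 0 := RatFunc.X_ne_zero
  have hx4 : x - 4 ≠ 0 := by
    have h : x - 4 = algebraMap (Polynomial (RatFunc ℚ)) (RatFunc (RatFunc ℚ))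
        (Polynomial.X - Polynomial.C 4) := by
      simp [map_sub, RatFunc.algebraMap_X, RatFunc.algebraMap_C, map_ofNat]
      rfl
    rw [h]
    exact RatFunc.algebraMap_ne_zero (Polynomial.X_sub_C_ne_zero 4)
  have hd : x^2 * (x - 4)^2 ≠ 0 := mul_ne_zero (pow_ne_zero _ hx) (pow_ne_zero _ hx4)
  have hD : x^6 * (x - 4)^6 ≠ 0 := mul_ne_zero (pow_ne_zero _ hx) (pow_ne_zero _ hx4)
  show φx^3 - 4*φx^2 - 160*φx - 1264 - u^6*(x^3 - 4*x^2 + 16) =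
      pplus * pminus * (x^3 - 4*x^2 + 16) / (x^6 * (x - 4)^6)
  rw [eq_div_iff hD]
  simp only [φx, pplus, pminus, div_pow]
  field_simp
  ring
end

section
/- In ℚ(u)[x] define p⁺(x) = (1-u^3)x^8 - (10-3u^3)x^6 - 32x^5 - 3u^3 x^4 - 32x^3 + (10+u^3)x^2 - 1 and p⁻(x) = (1+u^3)x^8 - (10+3u^3)x^6 - 32x^5 + 3u^3 x^4 - 32x^3 + (10-u^3)x^2 - 1. Let φ_x(x) = (x^6 + 5x^4 + 16x^3 - 5x^2 - 1)/(x(x+1)^2(x-1)^2). Then in ℚ(u)(x) one has φ_x(x)^3 + φ_x(x)^2 - 36φ_x(x) - 140 - u^6(x^3 + x^2 - x) = p⁺(x)·p⁻(x)·(x^2 + x - 1) / (x^3(x+1)^6(x-1)^6). -/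
set_option maxHeartbeats 2000000 in
/-- Factorization of the intersection of the cubic C_u with the degree-6 curve
x₂ = φ_x(x₁), in the rational function field ℚ(u)(x). -/
theorem stmt_3 :
    let u : RatFunc (RatFunc ℚ) := RatFunc.C RatFunc.X
    let x : RatFunc (RatFunc ℚ) := RatFunc.X
    let φx : RatFunc (RatFunc ℚ) :=
      (x^6 + 5*x^4 + 16*x^3 - 5*x^2 - 1) / (x * (x + 1)^2 * (x - 1)^2)
    let pplus : RatFunc (RatFunc ℚ) :=
      (1 - u^3)*x^8 - (10 - 3*u^3)*x^6 - 32*x^5 - 3*u^3*x^4 - 32*x^3 + (10 + u^3)*x^2 - 1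
    let pminus : RatFunc (RatFunc ℚ) :=
      (1 + u^3)*x^8 - (10 + 3*u^3)*x^6 - 32*x^5 + 3*u^3*x^4 - 32*x^3 + (10 - u^3)*x^2 - 1
    φx^3 + φx^2 - 36*φx - 140 - u^6*(x^3 + x^2 - x) =
      pplus * pminus * (x^2 + x - 1) / (x^3 * (x + 1)^6 * (x - 1)^6) := by
  intro u x φx pplus pminus
  have hx : x ≠ 0 := RatFunc.X_ne_zero
  have h1 : x + 1 ≠ 0 := by
    have hcast : x + 1 = algebraMap (Polynomial (RatFunc ℚ)) _ (Polynomial.X + 1) := by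
      simp [x, RatFunc.algebraMap_X]
    rw [hcast]
    refine RatFunc.algebraMap_ne_zero (fun h => ?_)
    simpa [Polynomial.coeff_one] using congrArg (Polynomial.coeff · 1) h
  have h2 : x - 1 ≠ 0 := by
    have hcast : x - 1 = algebraMap (Polynomial (RatFunc ℚ)) _ (Polynomial.X - 1) := by
      simp [x, RatFunc.algebraMap_X]
    rw [hcast]
    refine RatFunc.algebraMap_ne_zero (fun h => ?_)
    simpa [Polynomial.coeff_one] using congrArg (Polynomial.coeff · 1) h
  set N : RatFunc (RatFunc ℚ) := x^6 + 5*x^4 + 16*x^3 - 5*x^2 - 1 with hN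
  set d : RatFunc (RatFunc ℚ) := x * (x + 1)^2 * (x - 1)^2 with hdd
  have hd : d ≠ 0 := mul_ne_zero (mul_ne_zero hx (pow_ne_zero 2 h1)) (pow_ne_zero 2 h2)
  have hφ : φx * d = N := div_mul_cancel₀ N hd
  have hd3 : x^3 * (x + 1)^6 * (x - 1)^6 ≠ 0 :=
    mul_ne_zero (mul_ne_zero (pow_ne_zero 3 hx) (pow_ne_zero 6 h1)) (pow_ne_zero 6 h2)
  apply mul_right_cancel₀ hd3
  rw [div_mul_cancel₀ _ hd3]
  have hcube : x^3 * (x + 1)^6 * (x - 1)^6 = d^3 := by rw [hdd]; ring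
  rw [hcube]
  linear_combination ((φx*d)^2 + (φx*d)*N + N^2 + (φx*d + N)*d - 36*d^2) * hφ
end

section
/- Let q⁺(x1, x2, z) ∈ ℚ(u)[x1, x2, z] be the cubic form q⁺ = (u^9 + 2u^6 - 340u^3 + 1000)x1^3 + 5(u^6 - 12u^3 - 100)x1^2 x2 + 40u^3(u^3 - 5)x1^2 z + 12(u^3 - 10)x1 x2^2 + 4(19u^3 + 10)x1 x2 z - (u^9 - 10u^6 - 340u^3 - 2600)x1 z^2 + 4(u^3 + 10)x2^2 z - (u^6 - 32u^3 + 180)x2 z^2 - 4(u^6 + 10u^3 + 300)z^3. Let φ_x(x) = (x^6 + 5x^4 + 16x^3 - 5x^2 - 1)/(x(x+1)^2(x-1)^2) and p⁺(x) = (1-u^3)x^8 - (10-3u^3)x^6 - 32x^5 - 3u^3 x^4 - 32x^3 + (10+u^3)x^2 - 1. Then the numerator of the rational function q⁺(x, φ_x(x), 1), namely x^3(x+1)^6(x-1)^6 · q⁺(x, φ_x(x), 1), is divisible by p⁺(x) in ℚ(u)[x]. -/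
open Polynomial

/-- The numerator x³(x+1)⁶(x-1)⁶ · q⁺(x, φ_x(x), 1) of the auxiliary cubic of the
degree-6 example, evaluated along x₂ = φ_x(x₁), is divisible by p⁺(x) in ℚ(u)[x].
Here the numerator is written by clearing the denominator d = x(x+1)²(x-1)² of φ_x
from the cubic form q⁺, so N = d³·q⁺(x, n/d, 1) with n the numerator of φ_x. -/
theorem stmt_7 :
    let u : Polynomial (RatFunc ℚ) := C RatFunc.X
    let x : Polynomial (RatFunc ℚ) := X
    let n : Polynomial (RatFunc ℚ) := x^6 + 5*x^4 + 16*x^3 - 5*x^2 - 1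
    let d : Polynomial (RatFunc ℚ) := x * (x + 1)^2 * (x - 1)^2
    let pplus : Polynomial (RatFunc ℚ) :=
      (1 - u^3)*x^8 - (10 - 3*u^3)*x^6 - 32*x^5 - 3*u^3*x^4 - 32*x^3 + (10 + u^3)*x^2 - 1
    let N : Polynomial (RatFunc ℚ) :=
      (u^9 + 2*u^6 - 340*u^3 + 1000) * x^3 * d^3
      + 5*(u^6 - 12*u^3 - 100) * x^2 * n * d^2
      + 40*u^3*(u^3 - 5) * x^2 * d^3
      + 12*(u^3 - 10) * x * n^2 * d
      + 4*(19*u^3 + 10) * x * n * d^2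
      - (u^9 - 10*u^6 - 340*u^3 - 2600) * x * d^3
      + 4*(u^3 + 10) * n^2 * d
      - (u^6 - 32*u^3 + 180) * n * d^2
      - 4*(u^6 + 10*u^3 + 300) * d^3
    pplus ∣ N := by
  intro u x n d pplus N
  refine ⟨(-40 - 4*u^3)*x + (-60 + 20*u^3 - u^6)*x^2 + (520 + 4*u^3)*x^3
    + (-360 - 68*u^3 + 4*u^6)*x^4 + (-840 - 36*u^3)*x^5 + (1280 + 68*u^3 - 6*u^6)*x^6
    + (280 + 76*u^3)*x^7 + (-1240 - 12*u^3 + 4*u^6)*x^8 + (80 - 40*u^3)*x^9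
    + (380 - 8*u^3 - u^6)*x^10, ?_⟩
  show N = pplus * _
  simp only [N, pplus, n, d, x, u]
  ring
end

section
/- Define polynomials f, g, h ∈ ℚ[s] by: f(s) = 3s^10 + 4242s^9 + 2430679s^8 + 730135384s^7 + 129150804662s^6 + 16365054527404s^5 + 1890896931056342s^4 + 156511003892745304s^3 + 7628511948299823559s^2 + 194918754081273106962s + 2018249984797680027603; g(s) = s^14 + 2242s^13 + 2236395s^12 + 1318219892s^11 + 514922124233s^10 + 141266126525854s^9 + 27916724974734827s^8 + 3983998405505436120s^7 + 408728770355092602107s^6 + 30281648805286481009374s^5 + 1616046206494303287179993s^4 + 60571847938187268807626612s^3 + 1504534724917202541777070395s^2 + 22083100659160664074343947522s + 144209936106499234037676064081; h(s) = s(s+121)(5s^2 + 1958s + 73205). Then in ℚ(s), the point (X, Y) = (f(s)/(192 h(s)^2), (s-121)g(s)/(512 h(s)^3)) satisfies Y^2 = X^3 - (7936/3)X - 704s - 6082432/27 - 10307264/s. -/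
private instance : CharZero (RatFunc ℚ) :=
  charZero_of_injective_algebraMap (RatFunc.algebraMap_injective ℚ)

set_option maxHeartbeats 4000000 in
private lemma aux9 (s f g h : RatFunc ℚ) (hs : s ≠ 0) (hh : h ≠ 0)
    (key : 729*s*((s-121)*g)^2
      = 27*s*f^3 - 2632974336*s*f*h^4 - 134536495104*(s^2*h^6)
        - 43050772463616*(s*h^6) - 1969748824817664*h^6) :
    ((s-121)*g/(512*h^3))^2
      = (f/(192*h^2))^3 - (7936/3)*(f/(192*h^2)) - 704*s - 6082432/27 - 10307264/s := by
  have hD : (191102976*(s*h^6) : RatFunc ℚ) ≠ 0 :=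
    mul_ne_zero (by norm_num) (mul_ne_zero hs (pow_ne_zero _ hh))
  have h512 : ((512:RatFunc ℚ)*h^3) ≠ 0 := mul_ne_zero (by norm_num) (pow_ne_zero _ hh)
  have h192 : ((192:RatFunc ℚ)*h^2) ≠ 0 := mul_ne_zero (by norm_num) (pow_ne_zero _ hh)
  have e1 : ((s-121)*g/(512*h^3))^2 = (729*s*((s-121)*g)^2)/(191102976*(s*h^6)) := by
    rw [div_pow, div_eq_div_iff (pow_ne_zero _ h512) hD]; ring
  have e2 : (f/(192*h^2))^3 = (27*s*f^3)/(191102976*(s*h^6)) := by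
    rw [div_pow, div_eq_div_iff (pow_ne_zero _ h192) hD]; ring
  have e3 : (7936/3)*(f/(192*h^2)) = (2632974336*s*f*h^4)/(191102976*(s*h^6)) := by
    rw [div_mul_div_comm, div_eq_div_iff (mul_ne_zero (by norm_num) h192) hD]; ring
  have e4 : (704:RatFunc ℚ)*s = (134536495104*(s^2*h^6))/(191102976*(s*h^6)) := by
    rw [eq_div_iff hD]; ring
  have e5 : (6082432/27:RatFunc ℚ) = (43050772463616*(s*h^6))/(191102976*(s*h^6)) := by
    rw [div_eq_div_iff (by norm_num) hD]; ring
  have e6 : (10307264:RatFunc ℚ)/s = (1969748824817664*h^6)/(191102976*(s*h^6)) := by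
    rw [div_eq_div_iff hs hD]; ring
  rw [e1, e2, e3, e4, e5, e6, div_sub_div_same, div_sub_div_same, div_sub_div_same,
    div_sub_div_same, div_eq_div_iff hD hD]
  linear_combination (191102976*(s*h^6)) * key

set_option maxHeartbeats 4000000 in
/-- The section P_φ corresponding to the 5-isogeny satisfies the Weierstrass equation of
the Inose surface F⁽¹⁾ : Y² = X³ - (7936/3)X - 704s - 6082432/27 - 10307264/s. -/
theorem stmt_9 :
    let s : RatFunc ℚ := RatFunc.X
    let f : RatFunc ℚ :=
      3*s^10 + 4242*s^9 + 2430679*s^8 + 730135384*s^7 + 129150804662*s^6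
      + 16365054527404*s^5 + 1890896931056342*s^4 + 156511003892745304*s^3
      + 7628511948299823559*s^2 + 194918754081273106962*s + 2018249984797680027603
    let g : RatFunc ℚ :=
      s^14 + 2242*s^13 + 2236395*s^12 + 1318219892*s^11 + 514922124233*s^10
      + 141266126525854*s^9 + 27916724974734827*s^8 + 3983998405505436120*s^7
      + 408728770355092602107*s^6 + 30281648805286481009374*s^5
      + 1616046206494303287179993*s^4 + 60571847938187268807626612*s^3
      + 1504534724917202541777070395*s^2 + 22083100659160664074343947522*s
      + 144209936106499234037676064081
    let h : RatFunc ℚ := s * (s + 121) * (5*s^2 + 1958*s + 73205)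
    let Xc : RatFunc ℚ := f / (192 * h^2)
    let Yc : RatFunc ℚ := (s - 121) * g / (512 * h^3)
    Yc^2 = Xc^3 - (7936/3) * Xc - 704*s - 6082432/27 - 10307264/s := by
  intro s f g h Xc Yc
  have hs : s ≠ 0 := RatFunc.X_ne_zero
  have h1 : s + 121 ≠ 0 := by
    show RatFunc.X + 121 ≠ 0
    simpa using (RatFunc.algebraMap_ne_zero (Polynomial.X_add_C_ne_zero (121:ℚ)))
  have h2 : 5*s^2 + 1958*s + 73205 ≠ 0 := by
    have hp : (5*Polynomial.X^2 + 1958*Polynomial.X + Polynomial.C 73205 : Polynomial ℚ) ≠ 0 := by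
      intro hc
      have := congrArg (Polynomial.eval 0) hc
      norm_num at this
    have h2' := RatFunc.algebraMap_ne_zero (K := ℚ) hp
    show 5*RatFunc.X^2 + 1958*RatFunc.X + 73205 ≠ 0
    simpa [map_add, map_mul, map_pow, map_ofNat, RatFunc.algebraMap_X, RatFunc.algebraMap_C]
      using h2'
  have hh : h ≠ 0 := mul_ne_zero (mul_ne_zero hs h1) h2
  have key : 729*s*((s-121)*g)^2
      = 27*s*f^3 - 2632974336*s*f*h^4 - 134536495104*(s^2*h^6)
        - 43050772463616*(s*h^6) - 1969748824817664*h^6 := by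
    simp only [f, g, h]
    ring
  exact aux9 s f g h hs hh key
end

section
/- Define f, g, h ∈ ℚ[s] by: f(s) = 3s^12 - 11568s^11 + 16300384s^10 - 9677907200s^9 + 2291334841600s^8 - 1084577868800000s^7 + 702031826176000000s^6 + 54228893440000000000s^5 + 5728337104000000000000s^4 + 1209738400000000000000000s^3 + 101877400000000000000000000s^2 + 3615000000000000000000000000s + 46875000000000000000000000000; g(s) = s^16 - 5784s^15 + 13675968s^14 - 16679958400s^13 + 10338144240640s^12 - 1473647335372800s^11 - 2426837586892800000s^10 + 1660357937152102400000s^9 - 221006891984578560000000s^8 - 83017896857605120000000000s^7 - 6067093967232000000000000000s^6 + 184205916921600000000000000000s^5 + 64613401504000000000000000000000s^4 + 5212487000000000000000000000000000s^3 + 213687000000000000000000000000000000s^2 + 4518750000000000000000000000000000000s + 39062500000000000000000000000000000000; h(s) = s(37s^4 - 51760s^3 + 8556000s^2 + 2588000000s + 92500000000). Then in ℚ(s), the point (X, Y) = (f(s)/(192 h(s)^2), -(s^2 + 50000)g(s)/(512 h(s)^3)) satisfies Y^2 = X^3 - (436/3)X + (5/4)s - 18997/27 - 62500/s. -/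
instance inst_s10 : CharZero (RatFunc ℚ) :=
  charZero_of_injective_algebraMap (algebraMap ℚ (RatFunc ℚ)).injective

theorem aux_stmt_10 (S H F G : RatFunc ℚ) (hS : S ≠ 0) (hH : H ≠ 0)
    (hkey : ((S^2+50000)*G)^2 * (108*S)
      = (F^3 - 5357568*H^4*F)*4*S + (135*S^2 - 75988*S - 6750000)*(512*H^3)^2) :
    (-((S^2+50000)*G) / (512*H^3))^2
      = (F^3 - 5357568*H^4*F) / (27*(512*H^3)^2) + (5/4)*S - 18997/27 - 62500/S := by
  field_simp
  linear_combination hkey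

set_option maxHeartbeats 4000000 in
/-- The section P_φ corresponding to the 6-isogeny satisfies the Weierstrass equation of
the Inose surface F⁽¹⁾ : Y² = X³ - (436/3)X + (5/4)s - 18997/27 - 62500/s. -/
theorem stmt_10 :
    let s : RatFunc ℚ := RatFunc.X
    let f : RatFunc ℚ :=
      3*s^12 - 11568*s^11 + 16300384*s^10 - 9677907200*s^9 + 2291334841600*s^8
      - 1084577868800000*s^7 + 702031826176000000*s^6 + 54228893440000000000*s^5
      + 5728337104000000000000*s^4 + 1209738400000000000000000*s^3
      + 101877400000000000000000000*s^2 + 3615000000000000000000000000*s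
      + 46875000000000000000000000000
    let g : RatFunc ℚ :=
      s^16 - 5784*s^15 + 13675968*s^14 - 16679958400*s^13 + 10338144240640*s^12
      - 1473647335372800*s^11 - 2426837586892800000*s^10 + 1660357937152102400000*s^9
      - 221006891984578560000000*s^8 - 83017896857605120000000000*s^7
      - 6067093967232000000000000000*s^6 + 184205916921600000000000000000*s^5
      + 64613401504000000000000000000000*s^4 + 5212487000000000000000000000000000*s^3
      + 213687000000000000000000000000000000*s^2
      + 4518750000000000000000000000000000000*s
      + 39062500000000000000000000000000000000
    let h : RatFunc ℚ :=
      s * (37*s^4 - 51760*s^3 + 8556000*s^2 + 2588000000*s + 92500000000)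
    let Xc : RatFunc ℚ := f / (192 * h^2)
    let Yc : RatFunc ℚ := -((s^2 + 50000) * g) / (512 * h^3)
    Yc^2 = Xc^3 - (436/3) * Xc + (5/4)*s - 18997/27 - 62500/s := by
  intro s f g h Xc Yc
  have hs : s ≠ 0 := RatFunc.X_ne_zero
  have hq : (37*s^4 - 51760*s^3 + 8556000*s^2 + 2588000000*s + 92500000000 : RatFunc ℚ) ≠ 0 := by
    have : (37*s^4 - 51760*s^3 + 8556000*s^2 + 2588000000*s + 92500000000 : RatFunc ℚ)
        = algebraMap (Polynomial ℚ) (RatFunc ℚ)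
          (37*Polynomial.X^4 - 51760*Polynomial.X^3 + 8556000*Polynomial.X^2
            + 2588000000*Polynomial.X + 92500000000) := by
      simp [s, map_add, map_sub, map_mul, map_pow, map_ofNat, RatFunc.algebraMap_X]
    rw [this]
    apply RatFunc.algebraMap_ne_zero
    intro hcon
    have := congrArg (fun p => Polynomial.coeff p 0) hcon
    simp [Polynomial.coeff_X_pow, Polynomial.coeff_ofNat_zero] at this
  have hhne : h ≠ 0 := mul_ne_zero hs hq
  have h1 : (192 * h^2 : RatFunc ℚ) ≠ 0 := mul_ne_zero (by norm_num) (pow_ne_zero _ hhne)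
  have h2 : ((192 * h^2 : RatFunc ℚ))^3 ≠ 0 := pow_ne_zero _ h1
  have key : Xc^3 - (436/3) * Xc = (f^3 - 5357568*h^4*f) / (27*(512*h^3)^2) := by
    show (f / (192*h^2))^3 - (436/3) * (f / (192*h^2)) = _
    rw [div_pow, ← mul_div_assoc, div_sub_div _ _ h2 h1,
      div_eq_div_iff (mul_ne_zero h2 h1)
        (mul_ne_zero (by norm_num)
          (pow_ne_zero _ (mul_ne_zero (by norm_num) (pow_ne_zero _ hhne))))]
    ring
  rw [key]
  exact aux_stmt_10 s h f g hs hhne (by show _ = _; simp only [f, g, h]; ring)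
end
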